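/- Trace-norm bound via the Hilbert projective metric: if ρ and σ are positive semidefinite operators with equal support and tr(ρ) = tr(σ), then ‖ρ − σ‖₁ ≤ tr(σ)·min(2^{D_Ω(ρ,σ)} − 1, 2). -/

import Mathlib

open scoped Matrix ComplexOrder

/-- `D_max(ρ,σ) = log₂ inf {λ > 0 : ρ ≤ λσ}` (Loewner order). -/
noncomputable def Dmax {n : Type*} [Fintype n] (ρ σ : Matrix n n ℂ) : ℝ :=
  Real.logb 2 (sInf {l : ℝ | 0 < l ∧ (l • σ - ρ).PosSemidef})

/-- Hilbert projective metric `D_Ω(ρ,σ) = D_max(ρ,σ) + D_max(σ,ρ)`. -/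
noncomputable def DOmega {n : Type*} [Fintype n] (ρ σ : Matrix n n ℂ) : ℝ :=
  Dmax ρ σ + Dmax σ ρ

/-- Trace norm of a Hermitian matrix via the functional calculus: `‖A‖₁ = tr|A|`. -/
noncomputable def traceNorm {n : Type*} [Fintype n] [DecidableEq n] (A : Matrix n n ℂ) : ℝ :=
  (Matrix.trace (cfc (fun x : ℝ => |x|) A)).re

/-- Equal supports: the kernels coincide. -/
def SameSupport {n : Type*} [Fintype n] (ρ σ : Matrix n n ℂ) : Prop :=
  ∀ v : n → ℂ, ρ.mulVec v = 0 ↔ σ.mulVec v = 0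

section Helpers

open Matrix

set_option linter.unusedSectionVars false

variable {n : Type*} [Fintype n] [DecidableEq n]

lemma diag_re_nonneg {B : Matrix n n ℂ} (hB : B.PosSemidef) (i : n) : 0 ≤ (B i i).re := by
  have h := hB.re_dotProduct_nonneg (Pi.single i 1)
  simpa [dotProduct, mulVec, Pi.single_apply, Finset.sum_ite_eq] using h

lemma trace_eq_sum_eigen {A : Matrix n n ℂ} (hA : A.IsHermitian) :
    A.trace = ∑ i, (hA.eigenvalues i : ℂ) := by
  conv_lhs => rw [hA.spectral_theorem]
  rw [Unitary.conjStarAlgAut_apply, trace_mul_cycle, Unitary.coe_star_mul_self, one_mul, trace_diagonal]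
  rfl

lemma conj_trace_eq {A : Matrix n n ℂ} (hA : A.IsHermitian) (C : Matrix n n ℂ) :
    (star (hA.eigenvectorUnitary : Matrix n n ℂ) * C * (hA.eigenvectorUnitary : Matrix n n ℂ)).trace = C.trace := by
  rw [trace_mul_cycle (star (hA.eigenvectorUnitary : Matrix n n ℂ)) C _]
  rw [show (hA.eigenvectorUnitary : Matrix n n ℂ) * star (hA.eigenvectorUnitary : Matrix n n ℂ) = 1 from (Matrix.mem_unitaryGroup_iff).mp hA.eigenvectorUnitary.2, one_mul]

/-- key lemma: sum of positive parts of eigenvalues bounded by trace of a dominating PSD matrix -/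
lemma sum_pos_part_le {A C : Matrix n n ℂ} (hA : A.IsHermitian) (hC : C.PosSemidef)
    (hCA : (C - A).PosSemidef) :
    ∑ i, max (hA.eigenvalues i) 0 ≤ C.trace.re := by
  set U : Matrix n n ℂ := (hA.eigenvectorUnitary : Matrix n n ℂ) with hU
  have hdiag : star U * A * U = diagonal (RCLike.ofReal ∘ hA.eigenvalues) :=
    by rw [← Unitary.conjStarAlgAut_star_apply (S := ℂ)]; exact hA.conjStarAlgAut_star_eigenvectorUnitary
  have h1 : (star U * C * U).PosSemidef := by
    simpa [Matrix.star_eq_conjTranspose] using hC.conjTranspose_mul_mul_same U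
  have h2 : (star U * (C - A) * U).PosSemidef := by
    simpa [Matrix.star_eq_conjTranspose] using hCA.conjTranspose_mul_mul_same U
  have hsplit : star U * (C - A) * U = star U * C * U - star U * A * U := by
    rw [Matrix.mul_sub, Matrix.sub_mul]
  have hle : ∀ i, max (hA.eigenvalues i) 0 ≤ ((star U * C * U) i i).re := by
    intro i
    have ha := diag_re_nonneg h2 i
    rw [hsplit] at ha
    have : ((star U * C * U - star U * A * U) i i).re
        = ((star U * C * U) i i).re - hA.eigenvalues i := by
      rw [Matrix.sub_apply, Complex.sub_re, hdiag]
      simp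
    rw [this] at ha
    exact max_le (by linarith) (diag_re_nonneg h1 i)
  calc ∑ i, max (hA.eigenvalues i) 0 ≤ ∑ i, ((star U * C * U) i i).re :=
        Finset.sum_le_sum fun i _ => hle i
    _ = ((star U * C * U).trace).re := by rw [Matrix.trace]; simp [Matrix.diag]
    _ = C.trace.re := by rw [conj_trace_eq hA C]


lemma herm_smul {r : ℝ} {A : Matrix n n ℂ} (hA : A.IsHermitian) : (r • A).IsHermitian := by
  have h : (r • A)ᴴ = r • Aᴴ := by
    ext i j; simp [Matrix.conjTranspose_apply, Matrix.smul_apply, star_smul]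
  rw [Matrix.IsHermitian, h, hA.eq]

lemma herm_dot_star_eq {M : Matrix n n ℂ} (hM : M.IsHermitian) (x : n → ℂ) :
    star (star x ⬝ᵥ M *ᵥ x) = star x ⬝ᵥ M *ᵥ x := by
  conv_rhs => rw [← hM.eq, dotProduct_mulVec, ← star_mulVec, star_dotProduct]

lemma herm_dot_im_zero {M : Matrix n n ℂ} (hM : M.IsHermitian) (x : n → ℂ) :
    (star x ⬝ᵥ M *ᵥ x).im = 0 := by
  have h := congrArg Complex.im (herm_dot_star_eq hM x)
  simp only [Complex.star_def, Complex.conj_im] at h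
  linarith

lemma psd_smul {r : ℝ} (hr : 0 ≤ r) {A : Matrix n n ℂ} (hA : A.PosSemidef) :
    (r • A).PosSemidef := by
  refine .of_dotProduct_mulVec_nonneg (herm_smul hA.1) fun x => ?_
  rw [smul_mulVec, dotProduct_smul]
  have h := hA.dotProduct_mulVec_nonneg x
  rw [Complex.real_smul]
  exact mul_nonneg (by exact_mod_cast Complex.real_le_real.mpr hr) h


lemma conj_trace_eq'' {A : Matrix n n ℂ} (hA : A.IsHermitian) (C : Matrix n n ℂ) :
    ((star (hA.eigenvectorUnitary : Matrix n n ℂ)) * C * (hA.eigenvectorUnitary : Matrix n n ℂ)).trace = C.trace := by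
  rw [trace_mul_cycle (star (hA.eigenvectorUnitary : Matrix n n ℂ)) C _]
  rw [show (hA.eigenvectorUnitary : Matrix n n ℂ) * star (hA.eigenvectorUnitary : Matrix n n ℂ) = 1 from
    (Matrix.mem_unitaryGroup_iff).mp hA.eigenvectorUnitary.2, one_mul]

lemma sum_neg_part_le {A C : Matrix n n ℂ} (hA : A.IsHermitian) (hC : C.PosSemidef)
    (hCA : (C + A).PosSemidef) :
    ∑ i, max (- hA.eigenvalues i) 0 ≤ C.trace.re := by
  set U : Matrix n n ℂ := (hA.eigenvectorUnitary : Matrix n n ℂ) with hU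
  have hdiag : star U * A * U = diagonal (RCLike.ofReal ∘ hA.eigenvalues) :=
    by rw [← Unitary.conjStarAlgAut_star_apply (S := ℂ)]; exact hA.conjStarAlgAut_star_eigenvectorUnitary
  have h1 : (star U * C * U).PosSemidef := by
    simpa [Matrix.star_eq_conjTranspose] using hC.conjTranspose_mul_mul_same U
  have h2 : (star U * (C + A) * U).PosSemidef := by
    simpa [Matrix.star_eq_conjTranspose] using hCA.conjTranspose_mul_mul_same U
  have hsplit : star U * (C + A) * U = star U * C * U + star U * A * U := by
    rw [Matrix.mul_add, Matrix.add_mul]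
  have hle : ∀ i, max (- hA.eigenvalues i) 0 ≤ ((star U * C * U) i i).re := by
    intro i
    have ha := diag_re_nonneg h2 i
    rw [hsplit] at ha
    have heq : ((star U * C * U + star U * A * U) i i).re
        = ((star U * C * U) i i).re + hA.eigenvalues i := by
      rw [Matrix.add_apply, Complex.add_re, hdiag]
      simp
    rw [heq] at ha
    exact max_le (by linarith) (diag_re_nonneg h1 i)
  calc ∑ i, max (- hA.eigenvalues i) 0 ≤ ∑ i, ((star U * C * U) i i).re :=
        Finset.sum_le_sum fun i _ => hle i
    _ = ((star U * C * U).trace).re := by rw [Matrix.trace]; simp [Matrix.diag]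
    _ = C.trace.re := by rw [conj_trace_eq'' hA C]


lemma conj_trace_eq' {A : Matrix n n ℂ} (hA : A.IsHermitian) (C : Matrix n n ℂ) :
    ((hA.eigenvectorUnitary : Matrix n n ℂ) * C * star (hA.eigenvectorUnitary : Matrix n n ℂ)).trace = C.trace := by
  rw [trace_mul_cycle]
  rw [show star (hA.eigenvectorUnitary : Matrix n n ℂ) * (hA.eigenvectorUnitary : Matrix n n ℂ) = 1 from
    (Matrix.mem_unitaryGroup_iff').mp hA.eigenvectorUnitary.2, one_mul]

lemma traceNorm_eq_sum_abs {A : Matrix n n ℂ} (hA : A.IsHermitian) :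
    (Matrix.trace (cfc (fun x : ℝ => |x|) A)).re = ∑ i, |hA.eigenvalues i| := by
  rw [hA.cfc_eq, Matrix.IsHermitian.cfc, Unitary.conjStarAlgAut_apply, conj_trace_eq' hA, trace_diagonal]
  simp


lemma exists_dom_diag {d : n → ℝ} (hd : ∀ i, 0 ≤ d i) {ρ : Matrix n n ℂ} (hρ : ρ.PosSemidef)
    (hcol : ∀ j, d j = 0 → ∀ k, ρ j k = 0) :
    ∃ l : ℝ, 0 < l ∧ ((l • (diagonal fun i => (d i : ℂ))) - ρ).PosSemidef := by
  classical
  have hrow : ∀ j, d j = 0 → ∀ k, ρ k j = 0 := fun j hj k => by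
    rw [← hρ.1.apply k j, hcol j hj k, star_zero]
  have hDherm : (diagonal fun i => (d i : ℂ)).IsHermitian :=
    isHermitian_diagonal_of_self_adjoint _ (funext fun i => by
      simp [Complex.star_def, Complex.conj_ofReal])
  by_cases hPe : ∀ i, d i = 0
  case pos =>
    have hρ0 : ρ = 0 := by ext j k; exact hcol j (hPe j) k
    refine ⟨1, one_pos, ?_⟩
    have : (diagonal fun i => (d i : ℂ)) = 0 := by
      ext j k; by_cases h : j = k <;> simp [diagonal, h, hPe]
    rw [hρ0, this]
    simpa using Matrix.PosSemidef.zero (n := n) (R := ℂ)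
  case neg =>
    push_neg at hPe
    set P : Finset n := Finset.univ.filter (fun i => d i ≠ 0) with hP
    have hPne : P.Nonempty := by
      obtain ⟨i, hi⟩ := hPe
      exact ⟨i, by simp [hP, hi]⟩
    set c : ℝ := P.inf' hPne d with hc
    have hcpos : 0 < c := by
      rw [hc, Finset.lt_inf'_iff]
      intro i hi
      rw [hP, Finset.mem_filter] at hi
      exact lt_of_le_of_ne (hd i) (Ne.symm hi.2)
    set b : n → n → ℝ := fun j k => ‖ρ j k‖ with hb
    have hbnn : ∀ j k, 0 ≤ b j k := fun j k => norm_nonneg _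
    set R : ℝ := ∑ j, ∑ k, b j k with hR
    have hR0 : 0 ≤ R := Finset.sum_nonneg fun j _ => Finset.sum_nonneg fun k _ => hbnn j k
    refine ⟨(R + 1)/c, by positivity, ?_⟩
    set l : ℝ := (R + 1)/c with hl
    have hlpos : 0 < l := by positivity
    have hherm : ((l • (diagonal fun i => (d i : ℂ))) - ρ).IsHermitian :=
      (herm_smul hDherm).sub hρ.1
    refine .of_dotProduct_mulVec_nonneg hherm fun x => ?_
    rw [Complex.nonneg_iff]
    refine ⟨?_, (herm_dot_im_zero hherm x).symm⟩
    set a : n → ℝ := fun i => ‖x i‖ with ha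
    have hann : ∀ i, 0 ≤ a i := fun i => norm_nonneg _
    set s : ℝ := ∑ i, (if d i ≠ 0 then (a i)^2 else 0) with hs
    have hs0 : 0 ≤ s := Finset.sum_nonneg fun i _ => by positivity
    have hzero_row : ∀ j, d j = 0 → ∀ k, b j k = 0 := fun j hj k => by
      simp [hb, hcol j hj k]
    have hzero_col : ∀ k, d k = 0 → ∀ j, b j k = 0 := fun k hk j => by
      simp [hb, hrow k hk j]
    have hrowsum_le : ∀ j, ∑ k, b j k ≤ R := fun j =>
      Finset.single_le_sum (f := fun j => ∑ k, b j k)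
        (fun j _ => Finset.sum_nonneg fun k _ => hbnn j k) (Finset.mem_univ j)
    have hcolsum_le : ∀ k, ∑ j, b j k ≤ R := fun k => by
      rw [hR, Finset.sum_comm]
      exact Finset.single_le_sum (f := fun k => ∑ j, b j k)
        (fun k _ => Finset.sum_nonneg fun j _ => hbnn j k) (Finset.mem_univ k)
    have claimA : ∑ j, ∑ k, b j k * (a j)^2 ≤ R * s := by
      rw [hs, Finset.mul_sum]
      refine Finset.sum_le_sum fun j _ => ?_
      rw [← Finset.sum_mul]
      by_cases hj : d j = 0
      · simp only [hj, ne_eq, not_true_eq_false, if_false, mul_zero]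
        rw [Finset.sum_congr rfl fun k _ => hzero_row j hj k]
        simp
      · simp only [hj, ne_eq, not_false_eq_true, if_true]
        exact mul_le_mul_of_nonneg_right (hrowsum_le j) (sq_nonneg _)
    have claimB : ∑ j, ∑ k, b j k * (a k)^2 ≤ R * s := by
      rw [Finset.sum_comm, hs, Finset.mul_sum]
      refine Finset.sum_le_sum fun k _ => ?_
      rw [← Finset.sum_mul]
      by_cases hk : d k = 0
      · simp only [hk, ne_eq, not_true_eq_false, if_false, mul_zero]
        rw [Finset.sum_congr rfl fun j _ => hzero_col k hk j]
        simp
      · simp only [hk, ne_eq, not_false_eq_true, if_true]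
        exact mul_le_mul_of_nonneg_right (hcolsum_le k) (sq_nonneg _)
    have hsplit : star x ⬝ᵥ ((l • (diagonal fun i => (d i : ℂ))) - ρ) *ᵥ x
        = l • (star x ⬝ᵥ (diagonal fun i => (d i : ℂ)) *ᵥ x) - star x ⬝ᵥ ρ *ᵥ x := by
      rw [Matrix.sub_mulVec, dotProduct_sub, smul_mulVec, dotProduct_smul]
    have hDre : (star x ⬝ᵥ (diagonal fun i => (d i : ℂ)) *ᵥ x).re = ∑ i, d i * (a i)^2 := by
      rw [dotProduct, Complex.re_sum]
      refine Finset.sum_congr rfl fun i _ => ?_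
      rw [mulVec_diagonal]
      simp only [Pi.star_apply]
      have h2 : ((d i * (a i)^2 : ℝ) : ℂ) = (d i : ℂ) * ((Complex.normSq (x i) : ℝ) : ℂ) := by
        rw [ha]
        push_cast
        rw [show ((‖x i‖ : ℂ))^2 = ((Complex.normSq (x i) : ℝ) : ℂ) by
          exact_mod_cast congrArg (fun t : ℝ => (t : ℂ)) (Complex.sq_norm (x i))]
      have h3 : star (x i) * ((d i : ℂ) * x i) = ((d i * (a i)^2 : ℝ) : ℂ) := by
        rw [h2, Complex.normSq_eq_conj_mul_self, Complex.star_def]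
        ring
      rw [h3, Complex.ofReal_re]
    have hBre : (star x ⬝ᵥ ρ *ᵥ x).re ≤ R * s := by
      have h1 : (star x ⬝ᵥ ρ *ᵥ x).re = ∑ j, ∑ k, (star (x j) * (ρ j k * x k)).re := by
        rw [dotProduct, Complex.re_sum]
        refine Finset.sum_congr rfl fun j _ => ?_
        simp only [Pi.star_apply]
        rw [mulVec, dotProduct, Finset.mul_sum, Complex.re_sum]
      rw [h1]
      have key : ∀ j k, (star (x j) * (ρ j k * x k)).re ≤ b j k * (a j * a k) := by
        intro j k
        refine le_trans (Complex.re_le_norm _) ?_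
        rw [norm_mul, norm_mul, Complex.star_def, Complex.norm_conj]
        simp only [ha, hb]
        exact le_of_eq (by ring)
      calc ∑ j, ∑ k, (star (x j) * (ρ j k * x k)).re
          ≤ ∑ j, ∑ k, b j k * (a j * a k) :=
            Finset.sum_le_sum fun j _ => Finset.sum_le_sum fun k _ => key j k
        _ ≤ ∑ j, ∑ k, ((1:ℝ)/2 * (b j k * (a j)^2) + 1/2 * (b j k * (a k)^2)) := by
            refine Finset.sum_le_sum fun j _ => Finset.sum_le_sum fun k _ => ?_
            nlinarith [sq_nonneg (a j - a k), hbnn j k, hann j, hann k]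
        _ = 1/2 * (∑ j, ∑ k, b j k * (a j)^2) + 1/2 * (∑ j, ∑ k, b j k * (a k)^2) := by
            simp only [Finset.sum_add_distrib, ← Finset.mul_sum]
        _ ≤ R * s := by linarith
    have hAre : c * s ≤ ∑ i, d i * (a i)^2 := by
      rw [hs, Finset.mul_sum]
      refine Finset.sum_le_sum fun i _ => ?_
      by_cases hi : d i = 0
      · simp [hi]
      · simp only [hi, ne_eq, not_false_eq_true, if_true]
        refine mul_le_mul_of_nonneg_right ?_ (sq_nonneg _)
        exact Finset.inf'_le d (by simp [hP, hi])
    rw [hsplit]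
    have hre : (l • (star x ⬝ᵥ (diagonal fun i => (d i : ℂ)) *ᵥ x) - star x ⬝ᵥ ρ *ᵥ x).re
        = l * (star x ⬝ᵥ (diagonal fun i => (d i : ℂ)) *ᵥ x).re - (star x ⬝ᵥ ρ *ᵥ x).re := by
      rw [Complex.sub_re, Complex.real_smul, Complex.mul_re]
      simp
    rw [hre, hDre]
    have h1 : l * (c * s) ≤ l * (∑ i, d i * (a i)^2) :=
      mul_le_mul_of_nonneg_left hAre (le_of_lt hlpos)
    have h2 : l * (c * s) = (R + 1) * s := by
      rw [hl]; field_simp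
    nlinarith [hBre]


lemma exists_dom {ρ σ : Matrix n n ℂ} (hρ : ρ.PosSemidef) (hσ : σ.PosSemidef)
    (hker : ∀ v : n → ℂ, σ *ᵥ v = 0 → ρ *ᵥ v = 0) :
    ∃ l : ℝ, 0 < l ∧ (l • σ - ρ).PosSemidef := by
  classical
  set W : Matrix n n ℂ := (hσ.1.eigenvectorUnitary : Matrix n n ℂ) with hW
  set d : n → ℝ := hσ.1.eigenvalues with hd
  set D : Matrix n n ℂ := diagonal fun i => (d i : ℂ) with hD
  have hdnn : ∀ i, 0 ≤ d i := hσ.eigenvalues_nonneg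
  have hWW : W * star W = 1 := (Matrix.mem_unitaryGroup_iff).mp hσ.1.eigenvectorUnitary.2
  have hW'W : star W * W = 1 := (Matrix.mem_unitaryGroup_iff').mp hσ.1.eigenvectorUnitary.2
  have hσdiag : star W * σ * W = D := by
    have h : star W * σ * W = diagonal (RCLike.ofReal ∘ hσ.1.eigenvalues) := by
      rw [← Unitary.conjStarAlgAut_star_apply (S := ℂ)]; exact hσ.1.conjStarAlgAut_star_eigenvectorUnitary
    rw [hD]
    convert h using 2
    rfl
  set ρ' : Matrix n n ℂ := star W * ρ * W with hρ'def
  have hρ' : ρ'.PosSemidef := by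
    rw [hρ'def]
    simpa [Matrix.star_eq_conjTranspose] using hρ.conjTranspose_mul_mul_same W
  have hσW : σ * W = W * D := by
    have h := congrArg (fun X => W * X) hσdiag
    simp only [← mul_assoc] at h
    rw [hWW, one_mul] at h
    exact h
  have hcol : ∀ j, d j = 0 → ∀ k, ρ' j k = 0 := by
    intro j hj k
    have hDe : D *ᵥ Pi.single j 1 = 0 := by
      rw [hD, diagonal_mulVec_single]
      ext m
      by_cases h : m = j <;> simp [Pi.single_apply, h, hj]
    have hσv : σ *ᵥ (W *ᵥ Pi.single j 1) = 0 := by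
      rw [mulVec_mulVec, hσW, ← mulVec_mulVec, hDe, mulVec_zero]
    have hρv : ρ *ᵥ (W *ᵥ Pi.single j 1) = 0 := hker _ hσv
    have hρ'e : ρ' *ᵥ Pi.single j 1 = 0 := by
      rw [hρ'def, ← mulVec_mulVec, ← mulVec_mulVec, hρv, mulVec_zero]
    have hcolj : ∀ k, ρ' k j = 0 := by
      intro k
      have := congrFun hρ'e k
      simpa [mulVec_single] using this
    rw [← hρ'.1.apply j k, hcolj k, star_zero]
  obtain ⟨l, hl0, hpsd⟩ := exists_dom_diag hdnn hρ' hcol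
  have hρeq : ρ = W * ρ' * star W := by
    rw [hρ'def]
    simp only [← mul_assoc]
    rw [hWW, one_mul, mul_assoc, hWW, mul_one]
  have hσeq : σ = W * D * star W := by
    have h := congrArg (fun X => X * star W) hσW
    rw [mul_assoc, hWW, mul_one] at h
    exact h
  have key : W * (l • D - ρ') * star W = l • σ - ρ := by
    calc W * (l • D - ρ') * star W
        = W * (l • D) * star W - W * ρ' * star W := by rw [Matrix.mul_sub, Matrix.sub_mul]
      _ = l • (W * D * star W) - ρ := by rw [Matrix.mul_smul, Matrix.smul_mul, ← hρeq]
      _ = l • σ - ρ := by rw [← hσeq]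
  refine ⟨l, hl0, ?_⟩
  rw [← key]
  simpa [Matrix.star_eq_conjTranspose] using hpsd.mul_mul_conjTranspose_same W


lemma trace_re_nonneg {B : Matrix n n ℂ} (hB : B.PosSemidef) : 0 ≤ B.trace.re := by
  rw [Matrix.trace, Complex.re_sum]
  exact Finset.sum_nonneg fun i _ => diag_re_nonneg hB i

lemma mem_ge_one {ρ σ : Matrix n n ℂ}
    (htrρσ : ρ.trace.re = σ.trace.re) (htr0 : 0 < σ.trace.re) :
    ∀ l ∈ {l : ℝ | 0 < l ∧ (l • σ - ρ).PosSemidef}, 1 ≤ l := by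
  rintro l ⟨hl0, hpsd⟩
  have h := trace_re_nonneg hpsd
  rw [Matrix.trace_sub, Matrix.trace_smul, Complex.sub_re] at h
  rw [show ((l • σ.trace : ℂ)).re = l * σ.trace.re from by
    rw [Complex.real_smul, Complex.mul_re]; simp] at h
  rw [htrρσ] at h
  nlinarith

lemma inf_dom {ρ σ : Matrix n n ℂ} (hρ : ρ.PosSemidef) (hσ : σ.PosSemidef)
    (hne : {l : ℝ | 0 < l ∧ (l • σ - ρ).PosSemidef}.Nonempty)
    (htrρσ : ρ.trace.re = σ.trace.re) (htr0 : 0 < σ.trace.re) :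
    1 ≤ sInf {l : ℝ | 0 < l ∧ (l • σ - ρ).PosSemidef} ∧
      ((sInf {l : ℝ | 0 < l ∧ (l • σ - ρ).PosSemidef}) • σ - ρ).PosSemidef := by
  set S := {l : ℝ | 0 < l ∧ (l • σ - ρ).PosSemidef} with hS
  have hlb := mem_ge_one htrρσ htr0
  have hM1 : 1 ≤ sInf S := le_csInf hne (by exact hlb)
  refine ⟨hM1, ?_⟩
  have hherm : ((sInf S) • σ - ρ).IsHermitian := (herm_smul hσ.1).sub hρ.1
  refine .of_dotProduct_mulVec_nonneg hherm fun x => ?_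
  rw [Complex.nonneg_iff]
  refine ⟨?_, (herm_dot_im_zero hherm x).symm⟩
  set a : ℝ := (star x ⬝ᵥ σ *ᵥ x).re with haa
  set bb : ℝ := (star x ⬝ᵥ ρ *ᵥ x).re with hbb
  have ha0 : 0 ≤ a := (Complex.nonneg_iff.mp (hσ.dotProduct_mulVec_nonneg x)).1
  have hb0 : 0 ≤ bb := (Complex.nonneg_iff.mp (hρ.dotProduct_mulVec_nonneg x)).1
  have hsplitre : ∀ l : ℝ, (star x ⬝ᵥ ((l • σ - ρ) *ᵥ x)).re = l * a - bb := by
    intro l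
    rw [Matrix.sub_mulVec, dotProduct_sub, smul_mulVec, dotProduct_smul,
      Complex.sub_re, Complex.real_smul, Complex.mul_re]
    simp [haa, hbb]
  have hmem : ∀ l ∈ S, bb ≤ l * a := by
    rintro l ⟨hl0, hpsd⟩
    have h := (Complex.nonneg_iff.mp (hpsd.dotProduct_mulVec_nonneg x)).1
    rw [hsplitre l] at h
    linarith
  rw [hsplitre]
  rcases eq_or_lt_of_le ha0 with ha | ha
  · obtain ⟨l₀, hl₀⟩ := hne
    have := hmem l₀ hl₀
    rw [← ha] at this ⊢
    simpa using by linarith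
  · have : bb / a ≤ sInf S := le_csInf hne fun l hl => by
      rw [div_le_iff₀ ha]
      exact hmem l hl
    rw [div_le_iff₀ ha] at this
    linarith

end Helpers

/-- trace-norm bound via the Hilbert projective metric:
`‖ρ - σ‖₁ ≤ tr(σ)·min(2^{D_Ω(ρ,σ)} - 1, 2)`. -/
theorem stmt16 {n : Type*} [Fintype n] [DecidableEq n]
    (ρ σ : Matrix n n ℂ) (hρ : ρ.PosSemidef) (hσ : σ.PosSemidef)
    (hsupp : SameSupport ρ σ) (htr : ρ.trace = σ.trace) (htr0 : 0 < σ.trace) :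
    traceNorm (ρ - σ) ≤ (σ.trace).re * min ((2 : ℝ) ^ DOmega ρ σ - 1) 2 := by
  have htr0' : 0 < σ.trace.re := by
    have := Complex.lt_def.mp htr0
    simpa using this.1
  have htrρσ : ρ.trace.re = σ.trace.re := by rw [htr]
  have him0 : σ.trace.im = 0 := by
    have := Complex.lt_def.mp htr0
    simpa using this.2.symm
  have hne1 : {l : ℝ | 0 < l ∧ (l • σ - ρ).PosSemidef}.Nonempty :=
    exists_dom hρ hσ (fun v hv => (hsupp v).mpr hv)
  have hne2 : {l : ℝ | 0 < l ∧ (l • ρ - σ).PosSemidef}.Nonempty :=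
    exists_dom hσ hρ (fun v hv => (hsupp v).mp hv)
  obtain ⟨hM1, hMpsd⟩ := inf_dom hρ hσ hne1 htrρσ htr0'
  obtain ⟨hμ1, hμpsd⟩ := inf_dom hσ hρ hne2 htrρσ.symm (htrρσ ▸ htr0')
  set M : ℝ := sInf {l : ℝ | 0 < l ∧ (l • σ - ρ).PosSemidef} with hM
  set μ : ℝ := sInf {l : ℝ | 0 < l ∧ (l • ρ - σ).PosSemidef} with hμ
  have hMpos : 0 < M := lt_of_lt_of_le one_pos hM1
  have hμpos : 0 < μ := lt_of_lt_of_le one_pos hμ1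
  have hpow : (2 : ℝ) ^ DOmega ρ σ = M * μ := by
    rw [DOmega, Dmax, Dmax, Real.rpow_add two_pos,
      Real.rpow_logb two_pos (by norm_num) hMpos,
      Real.rpow_logb two_pos (by norm_num) hμpos]
  -- eigenvalues of A = ρ - σ
  have hA : (ρ - σ).IsHermitian := hρ.1.sub hσ.1
  have hsum0 : ∑ i, hA.eigenvalues i = 0 := by
    have h := trace_eq_sum_eigen hA
    rw [Matrix.trace_sub, htr, sub_self] at h
    have : ((∑ i, hA.eigenvalues i : ℝ) : ℂ) = 0 := by
      rw [Complex.ofReal_sum]; exact h.symm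
    exact_mod_cast this
  set Sp : ℝ := ∑ i, max (hA.eigenvalues i) 0 with hSp
  have hT : traceNorm (ρ - σ) = ∑ i, |hA.eigenvalues i| := traceNorm_eq_sum_abs hA
  have habs : ∀ x : ℝ, |x| = max x 0 + max (-x) 0 := by
    intro x
    rcases le_total 0 x with h | h
    · rw [abs_of_nonneg h, max_eq_left h, max_eq_right (by linarith), add_zero]
    · rw [abs_of_nonpos h, max_eq_right h, max_eq_left (by linarith), zero_add]
  have hneg_eq : ∀ x : ℝ, max (-x) 0 = max x 0 - x := by
    intro x
    rcases le_total 0 x with h | h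
    · rw [max_eq_right (by linarith), max_eq_left h]; ring
    · rw [max_eq_left (by linarith), max_eq_right h]; ring
  have hT2 : traceNorm (ρ - σ) = 2 * Sp := by
    rw [hT]
    calc ∑ i, |hA.eigenvalues i|
        = ∑ i, (max (hA.eigenvalues i) 0 + (max (hA.eigenvalues i) 0 - hA.eigenvalues i)) := by
          refine Finset.sum_congr rfl fun i _ => ?_
          rw [habs, hneg_eq]
      _ = 2 * Sp := by
          rw [Finset.sum_add_distrib, Finset.sum_sub_distrib, hsum0, sub_zero, hSp]
          ring
  -- bound 1 : Sp ≤ tr σ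
  have hbound1 : Sp ≤ σ.trace.re := by
    rw [← htrρσ]
    refine sum_pos_part_le hA hρ ?_
    rw [sub_sub_cancel]
    exact hσ
  -- bound 2 : Sp ≤ (M - 1) * tr σ
  have htrsmul : ∀ r : ℝ, ((r • σ).trace).re = r * σ.trace.re := by
    intro r
    rw [Matrix.trace_smul, Complex.real_smul, Complex.mul_re]
    simp [him0]
  have hbound2 : Sp ≤ (M - 1) * σ.trace.re := by
    have hC : ((M - 1) • σ).PosSemidef := psd_smul (by linarith) hσ
    have hCA : ((M - 1) • σ - (ρ - σ)).PosSemidef := by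
      have : (M - 1) • σ - (ρ - σ) = M • σ - ρ := by
        rw [sub_smul, one_smul]; abel
      rw [this]; exact hMpsd
    have := sum_pos_part_le hA hC hCA
    rwa [htrsmul] at this
  -- bound 3 : Sp ≤ (1 - 1/μ) * tr σ
  have hbound3 : Sp ≤ (1 - 1/μ) * σ.trace.re := by
    have hSeq : Sp = ∑ i, max (- hA.eigenvalues i) 0 := by
      rw [hSp]
      rw [Finset.sum_congr rfl fun i _ => hneg_eq (hA.eigenvalues i)]
      rw [Finset.sum_sub_distrib, hsum0, sub_zero]
    have hC : ((1 - 1/μ) • σ).PosSemidef := by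
      refine psd_smul ?_ hσ
      have : 1/μ ≤ 1 := by
        rw [div_le_one hμpos]; exact hμ1
      linarith
    have hCA : ((1 - 1/μ) • σ + (ρ - σ)).PosSemidef := by
      have heq : (1 - 1/μ) • σ + (ρ - σ) = (1/μ) • (μ • ρ - σ) := by
        rw [smul_sub, smul_smul, one_div_mul_cancel (ne_of_gt hμpos), one_smul, sub_smul, one_smul]
        abel
      rw [heq]
      exact psd_smul (by positivity) hμpsd
    have := sum_neg_part_le hA hC hCA
    rw [htrsmul] at this
    linarith [hSeq ▸ this]
  -- combine
  rw [hpow, hT2]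
  have hmin : σ.trace.re * min (M * μ - 1) 2 = min (σ.trace.re * (M * μ - 1)) (σ.trace.re * 2) :=
    mul_min_of_nonneg _ _ (le_of_lt htr0')
  rw [hmin]
  refine le_min ?_ ?_
  · have h1 : 2 * Sp ≤ ((M - 1) + (1 - 1/μ)) * σ.trace.re := by
      rw [add_mul]; linarith
    have h2 : ((M - 1) + (1 - 1/μ)) * σ.trace.re ≤ (M * μ - 1) * σ.trace.re := by
      refine mul_le_mul_of_nonneg_right ?_ (le_of_lt htr0')
      have hkey : (μ - 1) * (M - 1/μ) ≥ 0 := by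
        have : 1/μ ≤ 1 := by rw [div_le_one hμpos]; exact hμ1
        have hM1μ : 0 ≤ M - 1/μ := by linarith
        have := mul_nonneg (by linarith : (0:ℝ) ≤ μ - 1) hM1μ
        linarith
      have hexp : M * μ - 1 - ((M - 1) + (1 - 1/μ)) = (μ - 1) * (M - 1/μ) := by
        field_simp
        ring
      linarith
    calc 2 * Sp ≤ (M * μ - 1) * σ.trace.re := le_trans h1 h2
      _ = σ.trace.re * (M * μ - 1) := by ring
  · linarith
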